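/- Let G be a finite group and let χ : G → ℂ be a class function, i.e., χ(x g x⁻¹) = χ(g) for all x, g ∈ G. Then for every g ∈ G one has χ(g) = Σ_H (|H|/|G|) · Ind_H^G(θ_H · χ|_H)(g), where the sum runs over all cyclic subgroups H of G, θ_H · χ|_H denotes the function on H sending h to χ(h) if h generates H and to 0 otherwise, and for a function f : H → ℂ the induced class function is Ind_H^G f (g) = (1/|H|) · Σ_{x ∈ G with x⁻¹ g x ∈ H} f(x⁻¹ g x). -/

import Mathlib

/- Proposition 2.3: recovering a class function from its restrictions to cyclic subgroups.
For a finite group `G` and a class function `χ : G → ℂ`,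
`χ g = ∑_{H cyclic} (|H|/|G|) * Ind_H^G (θ_H · χ|_H) (g)`, where
`θ_H · χ|_H` sends `h ∈ H` to `χ h` if `h` generates `H` and to `0` otherwise, and
`Ind_H^G f (g) = (1/|H|) ∑_{x : x⁻¹gx ∈ H} f (x⁻¹gx)`. -/
open Classical in
theorem classfun_eq_sum_ind_cyclic (G : Type*) [Group G] [Fintype G]
    (χ : G → ℂ) (hχ : ∀ x g : G, χ (x * g * x⁻¹) = χ g) (g : G) :
    χ g = ∑ᶠ (H : Subgroup G) (_ : IsCyclic H),
      ((Nat.card H : ℂ) / (Nat.card G : ℂ)) *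
        ((1 / (Nat.card H : ℂ)) *
          ∑ x : G, if x⁻¹ * g * x ∈ H then
            (if Subgroup.zpowers (x⁻¹ * g * x) = H then χ (x⁻¹ * g * x) else 0)
          else 0) := by
  classical
  haveI : Fintype (Subgroup G) := Fintype.ofFinite _
  have hcardH : ∀ H : Subgroup G, (Nat.card H : ℂ) ≠ 0 := fun H => by
    have : 0 < Nat.card H := Nat.card_pos
    exact_mod_cast this.ne'
  have hcardG : (Nat.card G : ℂ) ≠ 0 := by
    have : 0 < Nat.card G := Nat.card_pos
    exact_mod_cast this.ne'
  simp_rw [finsum_eq_if]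
  rw [finsum_eq_sum_of_fintype]
  -- push the ifs and the constants inside the sum over x
  have step1 : ∀ H : Subgroup G,
      (if IsCyclic H then
        ((Nat.card H : ℂ) / (Nat.card G : ℂ)) *
          ((1 / (Nat.card H : ℂ)) *
            ∑ x : G, if x⁻¹ * g * x ∈ H then
              (if Subgroup.zpowers (x⁻¹ * g * x) = H then χ (x⁻¹ * g * x) else 0)
            else 0)
      else 0)
      = ∑ x : G, (if IsCyclic H then
          ((Nat.card H : ℂ) / (Nat.card G : ℂ)) *
            ((1 / (Nat.card H : ℂ)) *
              (if x⁻¹ * g * x ∈ H then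
                (if Subgroup.zpowers (x⁻¹ * g * x) = H then χ (x⁻¹ * g * x) else 0)
              else 0))
        else 0) := by
    intro H
    split_ifs with h
    · rw [Finset.mul_sum, Finset.mul_sum]
    · simp
  simp_rw [step1]
  rw [Finset.sum_comm]
  have step2 : ∀ x : G,
      (∑ H : Subgroup G, (if IsCyclic H then
          ((Nat.card H : ℂ) / (Nat.card G : ℂ)) *
            ((1 / (Nat.card H : ℂ)) *
              (if x⁻¹ * g * x ∈ H then
                (if Subgroup.zpowers (x⁻¹ * g * x) = H then χ (x⁻¹ * g * x) else 0)
              else 0))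
        else 0)) = χ g / (Nat.card G : ℂ) := by
    intro x
    rw [Finset.sum_eq_single (Subgroup.zpowers (x⁻¹ * g * x))]
    · have hcyc : IsCyclic (Subgroup.zpowers (x⁻¹ * g * x)) := by
        refine ⟨⟨⟨_, Subgroup.mem_zpowers (x⁻¹ * g * x)⟩, ?_⟩⟩
        rintro ⟨y, hy⟩
        obtain ⟨k, hk⟩ := Subgroup.mem_zpowers_iff.mp hy
        exact Subgroup.mem_zpowers_iff.mpr ⟨k, by ext; simpa using hk⟩
      rw [if_pos hcyc, if_pos (Subgroup.mem_zpowers _), if_pos rfl]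
      have hχx : χ (x⁻¹ * g * x) = χ g := by
        have := hχ x⁻¹ g
        simpa using this
      rw [hχx]
      field_simp
    · intro H _ hne
      split_ifs with h1 h2 h3
      · exact (hne h3.symm).elim
      · simp
      · simp
      · rfl
    · intro h; exact absurd (Finset.mem_univ _) h
  simp_rw [step2]
  rw [Finset.sum_const, Finset.card_univ]
  rw [Nat.card_eq_fintype_card] at hcardG ⊢
  rw [nsmul_eq_mul]
  field_simp
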